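/- If the influence graph of a Boolean network f on finitely many variables has no cycle (positive or negative), then f has a unique fixed point, and the fully asynchronous state transition graph of f has a unique attractor, which is that fixed point. -/

import Mathlib

/-- Three truth values: false, unknown, true. -/
inductive TV3 | fls | unk | tru
  deriving DecidableEq

namespace TV3

def toFin : TV3 → Fin 3
  | fls => 0 | unk => 1 | tru => 2

/-- The truth order f < u < t. -/
instance : LinearOrder TV3 :=
  LinearOrder.lift' toFin (by intro a b h; cases a <;> cases b <;> simp_all [toFin])

instance : BoundedOrder TV3 where
  top := tru
  bot := fls
  le_top x := by cases x <;> decide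
  bot_le x := by cases x <;> decide

/-- Kleene negation. -/
def neg : TV3 → TV3 | fls => tru | unk => unk | tru => fls

end TV3

def ofBool : Bool → TV3 | true => .tru | false => .fls

/-- The subset order on truth values: f <ₛ u and t <ₛ u. -/
def leS (x y : TV3) : Prop := x = y ∨ y = TV3.unk

section LP

variable {A : Type*} [Fintype A] [DecidableEq A]

/-- Pointwise subset order on 3-valued interpretations. -/
def leSI (I₁ I₂ : A → TV3) : Prop := ∀ a, leS (I₁ a) (I₂ a)

/-- The set of 2-valued interpretations compatible with a 3-valued one. -/
def gamma (I : A → TV3) : Set (A → Bool) :=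
  {J | ∀ a, I a ≠ TV3.unk → ofBool (J a) = I a}

/-- A ground normal rule: head ← pos, ∼neg. -/
structure Rule (A : Type*) where
  head : A
  pos : Finset A
  neg : Finset A
  deriving DecidableEq

/-- A finite ground normal logic program. -/
abbrev Program (A : Type*) [DecidableEq A] := Finset (Rule A)

/-- Immediate consequence operator T_P. -/
def TP (P : Program A) (J : A → Bool) (a : A) : Bool :=
  decide (∃ r ∈ P, r.head = a ∧ (∀ p ∈ r.pos, J p = true) ∧ (∀ q ∈ r.neg, J q = false))

/-- 2-valued value of the body formula of a rule. -/
noncomputable def bodyVal2 (r : Rule A) (s : A → Bool) : Bool :=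
  (r.pos.inf s) && !(r.neg.sup s)

/-- The Boolean network encoding of a program: f_v = ⋁_{head r = v} body-formula(r). -/
noncomputable def encBN (P : Program A) : A → (A → Bool) → Bool :=
  fun v s => P.sup fun r => if r.head = v then bodyVal2 r s else false

/-- 3-valued (Kleene) value of the body formula of a rule. -/
def bodyVal3 (r : Rule A) (I : A → TV3) : TV3 :=
  (r.pos.inf I) ⊓ (r.neg.inf fun q => TV3.neg (I q))

/-- 3-valued evaluation of rhs(a), the disjunction of bodies of rules with head a. -/
def rhs3 (P : Program A) (I : A → TV3) (a : A) : TV3 :=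
  P.sup fun r => if r.head = a then bodyVal3 r I else TV3.fls

/-- Signs of arcs. -/
inductive Sign | pos | neg
  deriving DecidableEq

/-- A signed directed graph on A. -/
abbrev SGraph (A : Type*) := A → A → Sign → Prop

def posArc (P : Program A) (u v : A) : Prop := ∃ r ∈ P, r.head = v ∧ u ∈ r.pos
def negArc (P : Program A) (u v : A) : Prop := ∃ r ∈ P, r.head = v ∧ u ∈ r.neg

/-- Dependency graph of a program. -/
def dg (P : Program A) : SGraph A := fun u v s =>
  match s with
  | Sign.pos => posArc P u v
  | Sign.neg => negArc P u v

/-- Influence graph of a Boolean network. -/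
def ig (f : A → (A → Bool) → Bool) : SGraph A := fun u v s =>
  match s with
  | Sign.pos => ∃ x : A → Bool, f v (Function.update x u false) < f v (Function.update x u true)
  | Sign.neg => ∃ x : A → Bool, f v (Function.update x u true) < f v (Function.update x u false)

/-- A (closed signed) cycle in a signed graph: vertices v₀,…,vₙ with arcs
vᵢ → vᵢ₊₁ (indices mod n+1) carrying the given signs. -/
structure SCycle (G : SGraph A) where
  n : ℕ
  vtx : Fin (n + 1) → A
  sgn : Fin (n + 1) → Sign
  arc : ∀ i, G (vtx i) (vtx (i + 1)) (sgn i)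

/-- A cycle is negative if it has an odd number of negative arcs. -/
def SCycle.IsNeg {G : SGraph A} (c : SCycle G) : Prop :=
  (Finset.univ.filter fun i => c.sgn i = Sign.neg).card % 2 = 1

/-- A cycle is positive if it has an even number of negative arcs. -/
def SCycle.IsPos {G : SGraph A} (c : SCycle G) : Prop :=
  (Finset.univ.filter fun i => c.sgn i = Sign.neg).card % 2 = 0

/-- U is a positive feedback vertex set: it meets every positive cycle. -/
def IsPFVS (G : SGraph A) (U : Finset A) : Prop :=
  ∀ c : SCycle G, c.IsPos → ∃ i, c.vtx i ∈ U

/-- P is tight: its positive dependency graph is acyclic. -/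
def Tight (P : Program A) : Prop :=
  IsEmpty (SCycle (fun u v s => s = Sign.pos ∧ posArc P u v))

/-- Synchronous update of a Boolean network. -/
def syncNext (f : A → (A → Bool) → Bool) (x : A → Bool) : A → Bool := fun v => f v x

/-- Fully asynchronous transition. -/
def asyncStep (f : A → (A → Bool) → Bool) (x y : A → Bool) : Prop :=
  ∃ v, f v x ≠ x v ∧ y = Function.update x v (f v x)

/-- Nonempty trap set of the asynchronous state transition graph. -/
def IsTrapSet (f : A → (A → Bool) → Bool) (S : Set (A → Bool)) : Prop :=
  S.Nonempty ∧ ∀ x ∈ S, ∀ y, asyncStep f x y → y ∈ S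

/-- Attractor: subset-minimal nonempty trap set. -/
def IsAttractor (f : A → (A → Bool) → Bool) (S : Set (A → Bool)) : Prop :=
  IsTrapSet f S ∧ ∀ T, IsTrapSet f T → T ⊆ S → T = S

def IsFixedPoint (f : A → (A → Bool) → Bool) (x : A → Bool) : Prop :=
  syncNext f x = x

/-- Trap space of a BN under synchronous update. -/
def IsSyncTrapSpace (f : A → (A → Bool) → Bool) (m : A → TV3) : Prop :=
  ∀ s ∈ gamma m, syncNext f s ∈ gamma m

/-- Trap space of a BN under asynchronous update. -/
def IsAsyncTrapSpace (f : A → (A → Bool) → Bool) (m : A → TV3) : Prop :=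
  ∀ s ∈ gamma m, ∀ y, asyncStep f s y → y ∈ gamma m

/-- Supported trap space: γ(I) is closed under T_P. -/
def IsSuppTrapSpace (P : Program A) (I : A → TV3) : Prop :=
  ∀ J ∈ gamma I, TP P J ∈ gamma I

/-- Supported partial model: 3-valued model of Clark's completion. -/
def IsSuppPartialModel (P : Program A) (I : A → TV3) : Prop :=
  ∀ a, I a = rhs3 P I a

/-- The 3-valued one-step operator of the Przymusinski reduct P^I applied to K:
negative literals are evaluated under I (Kleene negation), positive ones under K. -/
def Phi (P : Program A) (I K : A → TV3) (a : A) : TV3 :=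
  P.sup fun r =>
    if r.head = a then (r.pos.inf K) ⊓ (r.neg.inf fun q => TV3.neg (I q)) else TV3.fls

/-- Stable partial model: I is the ≤ₜ-least 3-valued model of the reduct P^I. -/
def IsStablePartial (P : Program A) (I : A → TV3) : Prop :=
  (∀ a, Phi P I I a ≤ I a) ∧
    ∀ K : A → TV3, (∀ a, Phi P I K a ≤ K a) → ∀ a, I a ≤ K a

/-- Regular model: ≤ₛ-minimal stable partial model. -/
def IsRegularModel (P : Program A) (I : A → TV3) : Prop :=
  IsStablePartial P I ∧ ∀ I', IsStablePartial P I' → leSI I' I → I' = I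

def Is2Valued (I : A → TV3) : Prop := ∀ a, I a ≠ TV3.unk

/-- The one-step operator of the Gelfond–Lifschitz reduct P^J applied to K. -/
noncomputable def PhiB (P : Program A) (J K : A → Bool) (a : A) : Bool :=
  P.sup fun r =>
    if r.head = a then ((r.pos.inf K) && !(r.neg.sup J)) else false

/-- Stable model: J is the least model of the Gelfond–Lifschitz reduct P^J. -/
def IsStableModel (P : Program A) (J : A → Bool) : Prop :=
  (∀ a, PhiB P J J a ≤ J a) ∧
    ∀ K : A → Bool, (∀ a, PhiB P J K a ≤ K a) → ∀ a, J a ≤ K a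

/-- Every cycle of dg(P) contains no negative arc. -/
def LocallyStratified (P : Program A) : Prop :=
  ∀ c : SCycle (dg P), ∀ i, c.sgn i ≠ Sign.neg

def NoNegCycle (G : SGraph A) : Prop := ∀ c : SCycle G, ¬ c.IsNeg
def NoPosCycle (G : SGraph A) : Prop := ∀ c : SCycle G, ¬ c.IsPos

end LP

section Stmt8Aux

variable {A : Type*} [Fintype A] [DecidableEq A]

/-- v depends on u in the network f. -/
def depOn (f : A → (A → Bool) → Bool) (u v : A) : Prop :=
  ∃ x : A → Bool, f v (Function.update x u false) ≠ f v (Function.update x u true)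

lemma depOn_arc {f : A → (A → Bool) → Bool} {u v : A} (h : depOn f u v) :
    ∃ s, ig f u v s := by
  obtain ⟨x, hx⟩ := h
  rcases lt_or_gt_of_ne hx with h' | h'
  · exact ⟨Sign.pos, x, h'⟩
  · exact ⟨Sign.neg, x, h'⟩

lemma eq_of_agree (f : A → (A → Bool) → Bool) (v : A) :
    ∀ (x y : A → Bool), (∀ u, depOn f u v → x u = y u) → f v x = f v y := by
  have key : ∀ (n : ℕ) (x y : A → Bool),
      (Finset.univ.filter fun u => x u ≠ y u).card = n →
      (∀ u, depOn f u v → x u = y u) → f v x = f v y := by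
    intro n
    induction n with
    | zero =>
      intro x y hc hag
      have hxy : x = y := by
        funext u
        by_contra hne
        have hu : u ∈ Finset.univ.filter fun u => x u ≠ y u := by simp [hne]
        rw [Finset.card_eq_zero] at hc
        simp [hc] at hu
      rw [hxy]
    | succ n ih =>
      intro x y hc hag
      have hne : (Finset.univ.filter fun u => x u ≠ y u).Nonempty := by
        rw [← Finset.card_pos, hc]; omega
      obtain ⟨u, hu⟩ := hne
      have hu' : x u ≠ y u := by simpa using hu
      have hnd : ¬ depOn f u v := fun hd => hu' (hag u hd)
      have h1 : f v x = f v (Function.update x u (y u)) := by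
        by_contra hc'
        apply hnd
        refine ⟨x, ?_⟩
        have hyu : y u = !(x u) := by
          cases hx : x u <;> cases hy : y u <;> simp_all
        cases hx : x u
        · have e1 : Function.update x u false = x := by
            rw [← hx]; exact Function.update_eq_self u x
          rw [hx] at hyu; simp at hyu
          rw [e1]
          rw [hyu] at hc'
          exact hc'
        · have e1 : Function.update x u true = x := by
            rw [← hx]; exact Function.update_eq_self u x
          rw [hx] at hyu; simp at hyu
          rw [e1]
          rw [hyu] at hc'
          exact fun e => hc' e.symm
      have hag' : ∀ w, depOn f w v → Function.update x u (y u) w = y w := by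
        intro w hw
        by_cases hwu : w = u
        · subst hwu; simp
        · rw [Function.update_of_ne hwu]; exact hag w hw
      have hcard : (Finset.univ.filter fun w => Function.update x u (y u) w ≠ y w).card = n := by
        have hset : (Finset.univ.filter fun w => Function.update x u (y u) w ≠ y w)
            = (Finset.univ.filter fun w => x w ≠ y w).erase u := by
          ext w
          by_cases hwu : w = u <;> simp [Function.update_apply, hwu]
        rw [hset, Finset.card_erase_of_mem hu, hc]
        omega
      rw [h1]
      exact ih _ y hcard hag'
  intro x y hag
  exact key _ x y rfl hag

lemma transGen_path {r : A → A → Prop} {a b : A} (h : Relation.TransGen r a b) :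
    ∃ (k : ℕ) (p : ℕ → A), 0 < k ∧ p 0 = a ∧ p k = b ∧ ∀ i < k, r (p i) (p (i + 1)) := by
  induction h with
  | @single c hr =>
    refine ⟨1, fun i => if i = 0 then a else c, one_pos, by simp, by simp, ?_⟩
    intro i hi
    have hi0 : i = 0 := by omega
    subst hi0
    simpa using hr
  | @tail b c hab hbc ih =>
    obtain ⟨k, p, hk, h0, hkb, hstep⟩ := ih
    refine ⟨k + 1, fun i => if i = k + 1 then c else p i, by omega, by simp [h0], by simp, ?_⟩
    intro i hi
    have hne : i ≠ k + 1 := by omega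
    rcases Nat.lt_or_ge i k with hlt | hge
    · have hne2 : i + 1 ≠ k + 1 := by omega
      simpa [hne, hne2, Nat.ne_of_lt hlt] using hstep i hlt
    · have hik : i = k := by omega
      subst hik
      simpa [hne, hkb] using hbc

lemma no_transGen_loop {f : A → (A → Bool) → Bool} (h : IsEmpty (SCycle (ig f)))
    (a : A) : ¬ Relation.TransGen (depOn f) a a := by
  intro hloop
  obtain ⟨k, p, hk, h0, hka, hstep⟩ := transGen_path hloop
  obtain ⟨n, rfl⟩ : ∃ n, k = n + 1 := ⟨k - 1, by omega⟩
  have harc : ∀ i : Fin (n + 1), depOn f (p i.val) (p (i + 1).val) := by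
    intro i
    have hval := Fin.val_add_one i
    by_cases hlast : i = Fin.last n
    · have h2 : i.val = n := by rw [hlast]; rfl
      have h1 : (i + 1).val = 0 := by simp [hval, hlast]
      rw [h1, h0, ← hka, h2]
      exact hstep n (by omega)
    · have h1 : (i + 1).val = i.val + 1 := by simp [hval, hlast]
      rw [h1]
      exact hstep i.val i.isLt
  have hs : ∀ i : Fin (n + 1), ∃ s, ig f (p i.val) (p (i + 1).val) s :=
    fun i => depOn_arc (harc i)
  choose sgn hsgn using hs
  exact h.false ⟨n, fun i => p i.val, sgn, hsgn⟩

lemma wf_depOn {f : A → (A → Bool) → Bool} (h : IsEmpty (SCycle (ig f))) :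
    WellFounded (depOn f) := by
  have hwf : WellFounded (Relation.TransGen (depOn f)) := by
    have : IsIrrefl A (Relation.TransGen (depOn f)) := ⟨no_transGen_loop h⟩
    exact Finite.wellFounded_of_trans_of_irrefl _
  exact Subrelation.wf (fun {x y} hxy => Relation.TransGen.single hxy) hwf

open Classical in
noncomputable def stmt8fp (f : A → (A → Bool) → Bool) (wf : WellFounded (depOn f)) :
    A → Bool :=
  wf.fix fun v ih => f v fun u => if h : depOn f u v then ih u h else false

open Classical in
lemma stmt8fp_fixed (f : A → (A → Bool) → Bool) (wf : WellFounded (depOn f)) :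
    IsFixedPoint f (stmt8fp f wf) := by
  unfold IsFixedPoint syncNext
  funext v
  have h2 : stmt8fp f wf v
      = f v fun u => if h : depOn f u v then stmt8fp f wf u else false :=
    wf.fix_eq _ v
  rw [h2]
  exact eq_of_agree f v _ _ (fun u hd => by simp [hd])

lemma reach_fp (f : A → (A → Bool) → Bool) (wf : WellFounded (depOn f))
    (x : A → Bool) (hx : IsFixedPoint f x) :
    ∀ y, Relation.ReflTransGen (asyncStep f) y x := by
  have key : ∀ (n : ℕ) (y : A → Bool),
      (Finset.univ.filter fun v => y v ≠ x v).card = n →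
      Relation.ReflTransGen (asyncStep f) y x := by
    intro n
    induction n with
    | zero =>
      intro y hc
      have hyx : y = x := by
        funext v
        by_contra hv
        have hu : v ∈ Finset.univ.filter fun v => y v ≠ x v := by simp [hv]
        rw [Finset.card_eq_zero] at hc
        simp [hc] at hu
      rw [hyx]
    | succ n ih =>
      intro y hc
      have hfne : (Finset.univ.filter fun v => y v ≠ x v).Nonempty := by
        rw [← Finset.card_pos, hc]; omega
      obtain ⟨w0, hw0⟩ := hfne
      have hSne : {v | y v ≠ x v}.Nonempty := ⟨w0, by simpa using hw0⟩
      obtain ⟨v, hv, hmin⟩ := wf.has_min {v | y v ≠ x v} hSne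
      have hag : ∀ u, depOn f u v → y u = x u := by
        intro u hd
        by_contra hne
        exact hmin u hne hd
      have hfv : f v y = x v := by
        rw [eq_of_agree f v y x hag]
        exact congrFun hx v
      have hstep : asyncStep f y (Function.update y v (x v)) := by
        refine ⟨v, ?_, ?_⟩
        · rw [hfv]; exact fun hh => hv hh.symm
        · rw [hfv]
      have hvmem : v ∈ Finset.univ.filter fun w => y w ≠ x w :=
        Finset.mem_filter.mpr ⟨Finset.mem_univ v, hv⟩
      have hcard : (Finset.univ.filter fun w => Function.update y v (x v) w ≠ x w).card = n := by
        have hset : (Finset.univ.filter fun w => Function.update y v (x v) w ≠ x w)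
            = (Finset.univ.filter fun w => y w ≠ x w).erase v := by
          ext w
          by_cases hwv : w = v <;> simp [Function.update_apply, hwv]
        rw [hset, Finset.card_erase_of_mem hvmem, hc]
        omega
      exact Relation.ReflTransGen.head hstep (ih _ hcard)
  intro y
  exact key _ y rfl

end Stmt8Aux

/-- if the influence graph has no cycle, then f has a unique fixed
point, and the asynchronous STG has a unique attractor, which is that fixed
point. -/
theorem stmt8 {A : Type*} [Fintype A] [DecidableEq A]
    (f : A → (A → Bool) → Bool) (h : IsEmpty (SCycle (ig f))) :
    ∃ x : A → Bool, IsFixedPoint f x ∧ (∀ y, IsFixedPoint f y → y = x) ∧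
      IsAttractor f {x} ∧ ∀ S, IsAttractor f S → S = {x} := by
  have wf := wf_depOn h
  set x := stmt8fp f wf with hxdef
  have hfix : IsFixedPoint f x := stmt8fp_fixed f wf
  have huniq : ∀ y, IsFixedPoint f y → y = x := by
    intro y hy
    funext v
    refine wf.induction (C := fun v => y v = x v) v fun v ih => ?_
    have h1 : y v = f v y := (congrFun hy v).symm
    have h2 : f v y = f v x := eq_of_agree f v y x fun u hd => ih u hd
    have h3 : f v x = x v := congrFun hfix v
    show y v = x v
    rw [h1, h2, h3]
  have hnostep : ∀ z, ¬ asyncStep f x z := by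
    rintro z ⟨v, hv, -⟩
    exact hv (congrFun hfix v)
  have htrapx : IsTrapSet f {x} := by
    refine ⟨⟨x, rfl⟩, ?_⟩
    rintro s rfl z hz
    exact absurd hz (hnostep z)
  have hreach := reach_fp f wf x hfix
  have hmem : ∀ S, IsTrapSet f S → x ∈ S := by
    intro S hS
    obtain ⟨y, hy⟩ := hS.1
    have hclosed : ∀ z w, Relation.ReflTransGen (asyncStep f) z w → z ∈ S → w ∈ S := by
      intro z w hzw
      induction hzw with
      | refl => exact id
      | tail hsteps hstep ih => intro hz; exact hS.2 _ (ih hz) _ hstep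
    exact hclosed y x (hreach y) hy
  have hattr : IsAttractor f {x} := by
    refine ⟨htrapx, ?_⟩
    intro T hT hTsub
    exact Set.Subset.antisymm hTsub (Set.singleton_subset_iff.mpr (hmem T hT))
  refine ⟨x, hfix, huniq, hattr, ?_⟩
  intro S hS
  exact (hS.2 {x} htrapx (Set.singleton_subset_iff.mpr (hmem S hS.1))).symm
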